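/- Define $G_n = G_2 \times \Delta^{n-2} \subset \mathbb{C}^n$ for $n \geq 3$, where $G_2 = \{(z_1,z_2): |z_1|(1+|z_2|) < 1\}$, and let $D_m = G_n \cap \Psi^{-1}(T_m)$ where $T_m = T_{(n/2,\, mn/2,\, n, \dots, n)}$ and $\Psi(z) = (|z_1|^2, \dots, |z_n|^2)$. Then $(D_m)_{m \geq 1}$ is an increasing sequence of open sets with $\bigcup_{m=1}^\infty D_m = G_n$; in particular $G_n \cap B(0, \sqrt{m/2}) \subset D_m$ for every $m$. -/

import Mathlib

theorem key_ineq (a c m : ℝ) (ha : 0 ≤ a) (hc : 0 ≤ c) (hm : 1 ≤ m)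
    (h1 : a*(1+c) < 1) (h2 : a^2 + c^2 < m/2) : m * a^2 + c^2 ≤ m := by
  have ha1 : a < 1 := by nlinarith
  rcases le_or_gt (a^2) (1/2) with h | h
  · nlinarith [mul_nonneg (sub_nonneg.2 hm) (sq_nonneg a),
      mul_le_mul_of_nonneg_left h (sub_nonneg.2 hm)]
  · have hac : a*c < 1 - a := by nlinarith
    have h3 : (a*c)^2 < (1-a)^2 := by
      apply pow_lt_pow_left₀ hac (mul_nonneg ha hc)
      norm_num
    have ha13 : 1/2 < a := by nlinarith
    have hc2 : c^2 ≤ 2*(a*c)^2 := by nlinarith [sq_nonneg c]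
    nlinarith [mul_nonneg (sub_nonneg.2 hm)
      (mul_nonneg (sub_nonneg.2 ha1.le) (by linarith : (0:ℝ) ≤ 1 + a))]

theorem exhaustion_of_Gn (n : ℕ) (hn : 3 ≤ n)
    (Gn : Set (Fin n → ℂ))
    (hGn : Gn = {z : Fin n → ℂ | ‖z ⟨0, by omega⟩‖ * (1 + ‖z ⟨1, by omega⟩‖) < 1 ∧
      ∀ j : Fin n, 2 ≤ (j : ℕ) → ‖z j‖ < 1})
    (b : ℕ → Fin n → ℝ)
    (hb : b = fun (m : ℕ) (j : Fin n) => if (j : ℕ) = 0 then (n : ℝ) / 2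
      else if (j : ℕ) = 1 then (m : ℝ) * n / 2 else (n : ℝ))
    (D : ℕ → Set (Fin n → ℂ))
    (hD : D = fun m => Gn ∩ {z : Fin n → ℂ | ∑ j, ‖z j‖ ^ 2 / b m j < 1}) :
    (∀ m : ℕ, 1 ≤ m → IsOpen (D m)) ∧
    (∀ m : ℕ, 1 ≤ m → D m ⊆ D (m + 1)) ∧
    (⋃ m : ℕ, D (m + 1)) = Gn ∧
    (∀ m : ℕ, 1 ≤ m →
      Gn ∩ {z : Fin n → ℂ | ∑ j, ‖z j‖ ^ 2 < (m : ℝ) / 2} ⊆ D m) := by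
  have hn3 : (3:ℝ) ≤ (n:ℝ) := by exact_mod_cast hn
  set i0 : Fin n := ⟨0, by omega⟩ with hi0
  set i1 : Fin n := ⟨1, by omega⟩ with hi1
  set S : Finset (Fin n) := Finset.univ.filter (fun j : Fin n => 2 ≤ (j:ℕ)) with hS
  -- splitting lemma
  have hnotS : Finset.univ.filter (fun j : Fin n => ¬ 2 ≤ (j:ℕ)) = {i0, i1} := by
    ext j
    simp only [Finset.mem_filter, Finset.mem_univ, true_and, Finset.mem_insert,
      Finset.mem_singleton, Fin.ext_iff, hi0, hi1]
    omega
  have hsplit : ∀ h : Fin n → ℝ, ∑ j, h j = h i0 + h i1 + ∑ j ∈ S, h j := by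
    intro h
    rw [← Finset.sum_filter_add_sum_filter_not Finset.univ (fun j : Fin n => 2 ≤ (j:ℕ)) h,
      hnotS, Finset.sum_pair (by simp [Fin.ext_iff, hi0, hi1])]
    ring
  have hScard : (S.card : ℝ) = (n:ℝ) - 2 := by
    have h1 : S.card + ({i0, i1} : Finset (Fin n)).card = n := by
      rw [← hnotS, Finset.card_filter_add_card_filter_not, Finset.card_univ, Fintype.card_fin]
    have h2 : ({i0, i1} : Finset (Fin n)).card = 2 := by
      rw [Finset.card_pair (by simp [Fin.ext_iff, hi0, hi1])]
    have : S.card = n - 2 := by omega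
    rw [this]
    push_cast [Nat.cast_sub (by omega : 2 ≤ n)]
    ring
  have hSne : S.Nonempty := ⟨⟨2, by omega⟩, by simp [hS]⟩
  -- b evaluations
  have hb0 : ∀ m, b m i0 = (n:ℝ)/2 := by intro m; simp [hb, hi0]
  have hb1 : ∀ m, b m i1 = (m:ℝ)*n/2 := by intro m; simp [hb, hi1]
  have hbS : ∀ m, ∀ j ∈ S, b m j = (n:ℝ) := by
    intro m j hj
    have hj2 : 2 ≤ (j:ℕ) := by simpa [hS] using hj
    rw [hb]
    simp only []
    rw [if_neg (by omega), if_neg (by omega)]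
  -- the S-part bound for z ∈ Gn
  have hKbound : ∀ z : Fin n → ℂ, (∀ j : Fin n, 2 ≤ (j : ℕ) → ‖z j‖ < 1) →
      ∑ j ∈ S, ‖z j‖^2 / (n:ℝ) < ((n:ℝ)-2)/n := by
    intro z hz
    have h1 : ∑ j ∈ S, ‖z j‖^2 / (n:ℝ) < ∑ j ∈ S, 1/(n:ℝ) := by
      apply Finset.sum_lt_sum_of_nonempty hSne
      intro j hj
      have hj2 : 2 ≤ (j:ℕ) := by simpa [hS] using hj
      have := hz j hj2
      have h2 : ‖z j‖^2 < 1 := by nlinarith [norm_nonneg (z j)]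
      gcongr
    have h2 : ∑ j ∈ S, (1:ℝ)/(n:ℝ) = ((n:ℝ)-2)/n := by
      rw [Finset.sum_const, nsmul_eq_mul, hScard]
      ring
    linarith
  have hbpos : ∀ m : ℕ, 1 ≤ m → ∀ j : Fin n, 0 < b m j := by
    intro m hm j
    have hm1 : (1:ℝ) ≤ (m:ℝ) := by exact_mod_cast hm
    rw [hb]
    simp only []
    split_ifs <;> nlinarith
  refine ⟨?_, ?_, ?_, ?_⟩
  -- openness
  · intro m hm
    rw [hD]
    apply IsOpen.inter
    · rw [hGn]
      have : {z : Fin n → ℂ | ‖z i0‖ * (1 + ‖z i1‖) < 1 ∧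
          ∀ j : Fin n, 2 ≤ (j : ℕ) → ‖z j‖ < 1} =
          {z : Fin n → ℂ | ‖z i0‖ * (1 + ‖z i1‖) < 1} ∩
          ⋂ j : Fin n, {z : Fin n → ℂ | 2 ≤ (j : ℕ) → ‖z j‖ < 1} := by
        ext z
        simp [Set.mem_iInter]
      rw [this]
      apply IsOpen.inter
      · exact isOpen_lt (by fun_prop) continuous_const
      · apply isOpen_iInter_of_finite
        intro j
        by_cases hj : 2 ≤ (j:ℕ)
        · simp only [hj, true_implies]
          exact isOpen_lt (by fun_prop) continuous_const
        · simp [hj]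
    · exact isOpen_lt (continuous_finset_sum _ fun j _ =>
        ((continuous_apply j).norm.pow 2).div_const _) continuous_const
  -- monotone
  · intro m hm z hz
    rw [hD] at hz ⊢
    refine ⟨hz.1, ?_⟩
    have hsum : ∑ j, ‖z j‖ ^ 2 / b (m+1) j ≤ ∑ j, ‖z j‖ ^ 2 / b m j := by
      apply Finset.sum_le_sum
      intro j _
      apply div_le_div_of_nonneg_left (by positivity) (hbpos m hm j)
      rw [hb]
      simp only []
      split_ifs
      · exact le_refl _
      · push_cast; nlinarith
      · exact le_refl _
    exact lt_of_le_of_lt hsum hz.2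
  -- union
  · ext z
    simp only [Set.mem_iUnion]
    constructor
    · rintro ⟨m, hz⟩
      rw [hD] at hz
      exact hz.1
    · intro hz
      rw [hGn] at hz
      obtain ⟨hz1, hz2⟩ := hz
      set a := ‖z i0‖ with hadef
      set c := ‖z i1‖ with hcdef
      clear_value a c
      have ha0 : 0 ≤ a := by rw [hadef]; exact norm_nonneg _
      have hc0 : 0 ≤ c := by rw [hcdef]; exact norm_nonneg _
      have ha1 : a < 1 := by nlinarith
      set K := ∑ j ∈ S, ‖z j‖^2 / (n:ℝ) with hKdef
      have hK : K < ((n:ℝ)-2)/n := hKbound z hz2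
      set δ := 1 - (2*a^2/n + K) with hδdef
      clear_value K δ
      have hsum1 : (2:ℝ)/n + ((n:ℝ)-2)/n = 1 := by field_simp; ring
      have hδ : 0 < δ := by
        have ha2 : a^2 < 1 := by nlinarith
        have : 2*a^2/n < 2/n := by gcongr <;> nlinarith
        simp only [hδdef]
        linarith
      obtain ⟨m, hmgt⟩ := exists_nat_gt (2*c^2/((n:ℝ)*δ))
      refine ⟨m, ?_⟩
      rw [hD]
      refine ⟨by rw [hGn]; exact ⟨by rw [← hadef, ← hcdef]; exact hz1, hz2⟩, ?_⟩
      have hterm1 : c^2 / (((m:ℕ)+1:ℕ):ℝ)*0 = 0 := by ring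
      have hm1 : (0:ℝ) < ((m+1:ℕ):ℝ) := by positivity
      have hc2 : c^2 / (((m+1:ℕ):ℝ)*n/2) < δ := by
        rw [div_lt_iff₀ (by positivity)]
        have h1 : 2*c^2/((n:ℝ)*δ) < ((m+1:ℕ):ℝ) := by
          push_cast
          push_cast at hmgt
          linarith
        rw [div_lt_iff₀ (by positivity)] at h1
        nlinarith [h1]
      show ∑ j, ‖z j‖ ^ 2 / b (m+1) j < 1
      rw [hsplit (fun j => ‖z j‖ ^ 2 / b (m+1) j)]
      simp only [hb0, hb1, ← hadef, ← hcdef]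
      have hSsum : ∑ j ∈ S, ‖z j‖ ^ 2 / b (m+1) j = K := by
        rw [hKdef]
        apply Finset.sum_congr rfl
        intro j hj
        rw [hbS _ j hj]
      rw [hSsum]
      have ht0 : a^2 / ((n:ℝ)/2) = 2*a^2/n := by
        field_simp
      rw [ht0]
      linarith
  -- ball inclusion
  · intro m hm z hz
    obtain ⟨hzG, hzs⟩ := hz
    rw [hD]
    refine ⟨hzG, ?_⟩
    rw [hGn] at hzG
    obtain ⟨hz1, hz2⟩ := hzG
    set a := ‖z i0‖ with hadef
    set c := ‖z i1‖ with hcdef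
    clear_value a c
    have ha0 : 0 ≤ a := by rw [hadef]; exact norm_nonneg _
    have hc0 : 0 ≤ c := by rw [hcdef]; exact norm_nonneg _
    have hm1 : (1:ℝ) ≤ (m:ℝ) := by exact_mod_cast hm
    have hzs' : ∑ j, ‖z j‖ ^ 2 < (m:ℝ)/2 := hzs
    have habc : a^2 + c^2 ≤ ∑ j, ‖z j‖ ^ 2 := by
      rw [hsplit (fun j => ‖z j‖ ^ 2)]
      have : (0:ℝ) ≤ ∑ j ∈ S, ‖z j‖ ^ 2 := Finset.sum_nonneg fun j _ => by positivity
      simp only [← hadef, ← hcdef]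
      linarith
    have hkey : (m:ℝ) * a^2 + c^2 ≤ m :=
      key_ineq a c m ha0 hc0 hm1 hz1 (by linarith)
    set K := ∑ j ∈ S, ‖z j‖^2 / (n:ℝ) with hKdef
    have hK : K < ((n:ℝ)-2)/n := hKbound z hz2
    clear_value K
    have hsum1 : (2:ℝ)/n + ((n:ℝ)-2)/n = 1 := by field_simp; ring
    show ∑ j, ‖z j‖ ^ 2 / b m j < 1
    rw [hsplit (fun j => ‖z j‖ ^ 2 / b m j)]
    simp only [hb0, hb1, ← hadef, ← hcdef]
    have hSsum : ∑ j ∈ S, ‖z j‖ ^ 2 / b m j = K := by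
      rw [hKdef]
      apply Finset.sum_congr rfl
      intro j hj
      rw [hbS _ j hj]
    rw [hSsum]
    have hfirst : a^2 / ((n:ℝ)/2) + c^2 / ((m:ℝ)*n/2) ≤ 2/n := by
      have heq : a^2 / ((n:ℝ)/2) + c^2 / ((m:ℝ)*n/2)
          = 2*((m:ℝ)*a^2 + c^2)/((m:ℝ)*n) := by
        field_simp
      rw [heq]
      have heq2 : (2:ℝ)/(n:ℝ) = 2*(m:ℝ)/((m:ℝ)*n) := by
        field_simp
      rw [heq2]
      gcongr <;> linarith
    linarith
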